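/- The set {(4k-8m+1)/(4k+1) : k, m ∈ ℕ, 1 ≤ m ≤ k} is dense in the interval [-1,1]. -/
import Mathlib

theorem stmt_5 :
    Set.Icc (-1:ℝ) 1 ⊆ closure {x : ℝ | ∃ k m : ℕ, 1 ≤ m ∧ m ≤ k ∧
      x = (4*(k:ℝ) - 8*m + 1) / (4*k + 1)} := by
  intro y hy
  rw [Metric.mem_closure_iff]
  intro ε hε
  obtain ⟨hy1, hy2⟩ := hy
  obtain ⟨k, hk⟩ := exists_nat_gt (max 1 (10 / ε))
  have hk1 : (1:ℝ) ≤ k := le_of_lt (lt_of_le_of_lt (le_max_left _ _) hk)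
  have hkε : 10 / ε < k := lt_of_le_of_lt (le_max_right _ _) hk
  have hk1' : 1 ≤ k := by exact_mod_cast hk1
  set t : ℝ := (4*k+1)*(1-y)/8 with ht
  have ht0 : 0 ≤ t := by
    apply div_nonneg _ (by norm_num)
    apply mul_nonneg (by positivity) (by linarith)
  have htk : t ≤ k + 1/4 := by
    have h2 : (1 - y) ≤ 2 := by linarith
    rw [ht, div_le_iff₀ (by norm_num : (0:ℝ) < 8)]
    nlinarith [mul_le_mul_of_nonneg_left h2 (show (0:ℝ) ≤ 4*k+1 by positivity)]
  set m : ℕ := max 1 (min k ⌈t⌉₊) with hm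
  have hm1 : 1 ≤ m := le_max_left _ _
  have hmk : m ≤ k := max_le hk1' (min_le_left _ _)
  have hdist : |(m:ℝ) - t| ≤ 5/4 := by
    rcases le_or_gt ⌈t⌉₊ k with h1 | h1
    · rcases Nat.eq_zero_or_pos ⌈t⌉₊ with h0 | h0
      · have ht1 : t ≤ 0 := by rwa [Nat.ceil_eq_zero] at h0
        have ht2 : t = 0 := le_antisymm ht1 ht0
        have hm' : m = 1 := by simp [hm, h0]
        rw [hm', ht2]; norm_num
      · have hm' : m = ⌈t⌉₊ := by
          rw [hm, min_eq_right h1, max_eq_right h0]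
        rw [hm']
        have h2 : t ≤ (⌈t⌉₊ : ℝ) := Nat.le_ceil t
        have h3 : (⌈t⌉₊ : ℝ) < t + 1 := Nat.ceil_lt_add_one ht0
        rw [abs_sub_le_iff]; constructor <;> linarith
    · have hm' : m = k := by
        rw [hm, min_eq_left h1.le, max_eq_right hk1']
      have h3 : (⌈t⌉₊:ℝ) < t + 1 := Nat.ceil_lt_add_one ht0
      have h4 : (k:ℝ) + 1 ≤ ⌈t⌉₊ := by exact_mod_cast h1
      rw [hm', abs_sub_le_iff]; constructor <;> linarith
  refine ⟨(4*(k:ℝ) - 8*m + 1) / (4*k + 1), ⟨k, m, hm1, hmk, rfl⟩, ?_⟩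
  rw [Real.dist_eq]
  have hden : (0:ℝ) < 4*k + 1 := by positivity
  have key : y - (4*(k:ℝ) - 8*m + 1) / (4*k + 1) = 8*((m:ℝ) - t)/(4*k+1) := by
    field_simp [ht]; ring
  rw [key, abs_div, abs_of_pos hden, div_lt_iff₀ hden]
  have h8 : |8*((m:ℝ)-t)| ≤ 10 := by
    rw [abs_mul, abs_of_pos (by norm_num : (0:ℝ)<8)]; linarith
  have h10 : 10 < ε * (4*k+1) := by
    rw [div_lt_iff₀ hε] at hkε
    nlinarith
  linarith
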